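/- Fix an initial susceptance b̃ ∈ ℝ, an initial number of circuits γ̃ > 0, voltage angles θ_i, θ_j ∈ ℝ with |θ_i − θ_j| ≤ Θ for some Θ ≥ 0, and a nonempty finite set C ⊆ ℕ of candidate circuit additions with minimum element c_min and maximum element c_max. Define the candidate flow values a(c) = (1 + c/γ̃)·b̃·(θ_i − θ_j) for c ∈ C, and set M := ((c_max − c_min)/γ̃)·|b̃|·Θ. Then for all c, c′ ∈ C one has |a(c) − a(c′)| = (|c − c′|/γ̃)·|b̃|·|θ_i − θ_j| ≤ M, and consequently, for every f ∈ ℝ, there exists Γ : C → ℝ taking only values 0 and 1 with ∑_{c ∈ C} Γ(c) = 1 satisfying a(c) − f ≥ (Γ(c) − 1)·M and a(c) − f ≤ (1 − Γ(c))·M for all c ∈ C if and only if f = (1 + c/γ̃)·b̃·(θ_i − θ_j) for some c ∈ C. -/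
import Mathlib


/-- Explicit valid big-M constant for the transmission expansion flow
constraint: with `M = ((c_max − c_min)/γ̃)·|b̃|·Θ`, the pairwise deviations of
the candidate flow values `a c = (1 + c/γ̃)·b̃·(θ_i − θ_j)` are bounded by `M`,
and the big-M system is exactly equivalent to the disjunction of the exact
flow equalities. -/
theorem bigM_explicit_constant
    (btil : ℝ) (γtil : ℝ) (hγ : 0 < γtil)
    (θi θj Θ : ℝ) (hΘ0 : 0 ≤ Θ) (hΘ : |θi - θj| ≤ Θ)
    (C : Finset ℕ) (hC : C.Nonempty) :
    (∀ c ∈ C, ∀ c' ∈ C,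
      |(1 + (c : ℝ) / γtil) * btil * (θi - θj)
        - (1 + (c' : ℝ) / γtil) * btil * (θi - θj)|
      = (|(c : ℝ) - (c' : ℝ)| / γtil) * |btil| * |θi - θj| ∧
      |(1 + (c : ℝ) / γtil) * btil * (θi - θj)
        - (1 + (c' : ℝ) / γtil) * btil * (θi - θj)|
      ≤ (((C.max' hC : ℝ) - (C.min' hC : ℝ)) / γtil) * |btil| * Θ) ∧
    (∀ f : ℝ,
      (∃ Γ : ℕ → ℝ,
        (∀ c ∈ C, Γ c = 0 ∨ Γ c = 1) ∧
        (∑ c ∈ C, Γ c = 1) ∧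
        (∀ c ∈ C,
          (1 + (c : ℝ) / γtil) * btil * (θi - θj) - f
            ≥ (Γ c - 1) * ((((C.max' hC : ℝ) - (C.min' hC : ℝ)) / γtil) * |btil| * Θ) ∧
          (1 + (c : ℝ) / γtil) * btil * (θi - θj) - f
            ≤ (1 - Γ c) * ((((C.max' hC : ℝ) - (C.min' hC : ℝ)) / γtil) * |btil| * Θ))) ↔
      (∃ c ∈ C, f = (1 + (c : ℝ) / γtil) * btil * (θi - θj))) := by
  set M : ℝ := (((C.max' hC : ℝ) - (C.min' hC : ℝ)) / γtil) * |btil| * Θ with hM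
  have key : ∀ c ∈ C, ∀ c' ∈ C,
      |(1 + (c : ℝ) / γtil) * btil * (θi - θj)
        - (1 + (c' : ℝ) / γtil) * btil * (θi - θj)|
      = (|(c : ℝ) - (c' : ℝ)| / γtil) * |btil| * |θi - θj| := by
    intro c _ c' _
    have : (1 + (c : ℝ) / γtil) * btil * (θi - θj)
        - (1 + (c' : ℝ) / γtil) * btil * (θi - θj)
        = (((c : ℝ) - (c' : ℝ)) / γtil) * btil * (θi - θj) := by
      field_simp; ring
    rw [this, abs_mul, abs_mul, abs_div, abs_of_pos hγ]
  have keyle : ∀ c ∈ C, ∀ c' ∈ C,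
      |(1 + (c : ℝ) / γtil) * btil * (θi - θj)
        - (1 + (c' : ℝ) / γtil) * btil * (θi - θj)| ≤ M := by
    intro c hc c' hc'
    rw [key c hc c' hc']
    have h1 : |(c : ℝ) - (c' : ℝ)| ≤ ((C.max' hC : ℝ) - (C.min' hC : ℝ)) := by
      have hcmax : (c : ℝ) ≤ (C.max' hC : ℝ) := by
        exact_mod_cast C.le_max' c hc
      have hcmax' : (c' : ℝ) ≤ (C.max' hC : ℝ) := by
        exact_mod_cast C.le_max' c' hc'
      have hcmin : ((C.min' hC : ℝ)) ≤ (c : ℝ) := by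
        exact_mod_cast C.min'_le c hc
      have hcmin' : ((C.min' hC : ℝ)) ≤ (c' : ℝ) := by
        exact_mod_cast C.min'_le c' hc'
      rw [abs_sub_le_iff]; constructor <;> linarith
    have h2 : |(c : ℝ) - (c' : ℝ)| / γtil ≤ ((C.max' hC : ℝ) - (C.min' hC : ℝ)) / γtil :=
      by gcongr
    have hb : (0:ℝ) ≤ |btil| := abs_nonneg _
    have hθ : (0:ℝ) ≤ |θi - θj| := abs_nonneg _
    have hd : (0:ℝ) ≤ |(c : ℝ) - (c' : ℝ)| / γtil :=
      div_nonneg (abs_nonneg _) hγ.le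
    calc |(c : ℝ) - (c' : ℝ)| / γtil * |btil| * |θi - θj|
        ≤ ((C.max' hC : ℝ) - (C.min' hC : ℝ)) / γtil * |btil| * |θi - θj| := by
          apply mul_le_mul_of_nonneg_right _ hθ
          exact mul_le_mul_of_nonneg_right h2 hb
      _ ≤ M := by
          apply mul_le_mul_of_nonneg_left hΘ
          exact mul_nonneg (hd.trans h2) hb
  constructor
  · intro c hc c' hc'
    exact ⟨key c hc c' hc', keyle c hc c' hc'⟩
  · intro f
    constructor
    · rintro ⟨Γ, h01, hsum, hineq⟩
      have : ∃ c ∈ C, Γ c = 1 := by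
        by_contra h
        push_neg at h
        have : ∑ c ∈ C, Γ c = 0 := by
          apply Finset.sum_eq_zero
          intro c hc
          rcases h01 c hc with h0 | h1
          · exact h0
          · exact absurd h1 (h c hc)
        rw [this] at hsum; norm_num at hsum
      obtain ⟨c, hc, hΓc⟩ := this
      refine ⟨c, hc, ?_⟩
      obtain ⟨hge, hle⟩ := hineq c hc
      rw [hΓc] at hge hle
      simp at hge hle
      linarith
    · rintro ⟨c, hc, hf⟩
      refine ⟨fun c' => if c' = c then 1 else 0, ?_, ?_, ?_⟩
      · intro c' _; by_cases h : c' = c <;> simp [h]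
      · rw [Finset.sum_ite_eq' C c (fun _ => (1:ℝ))]
        simp [hc]
      · intro c' hc'
        by_cases h : c' = c
        · subst h
          simp [hf]
        · simp [h]
          have := keyle c' hc' c hc
          rw [abs_le] at this
          constructor <;> [linarith [this.1, hf]; linarith [this.2, hf]]
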